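/- Let O, X₁, X₂, X₃ ∈ ℝ² and N₁, N₂, N₃ ∈ ℝ² satisfy φ(Nᵢ) ≤ 1 for i = 1,2,3, N₁ + N₂ + N₃ = 0, and Nᵢ·(Xᵢ − O)^⊥ = φ°((Xᵢ − O)^⊥) for each i (i.e. the conical triod with vertex O and endpoints X₁,X₂,X₃ admits a balanced constant Cahn–Hoffman field). Then for every point T ∈ ℝ² and all Lipschitz curves γᵢ : [0,1] → ℝ² with γᵢ(0) = T and γᵢ(1) = Xᵢ (i = 1,2,3), one has Σ_{i=1}^{3} ∫₀¹ φ°(γᵢ'(t)^⊥) dt ≥ Σ_{i=1}^{3} φ°((Xᵢ − O)^⊥). In other words, any triod of curves joining X₁, X₂, X₃ through a common point has φ-length at least that of the critical conical triod through O (the calibration core of the theorem that every conical critical triod is φ-minimal). -/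

import Mathlib

/-- The crystalline norm `φ` whose unit ball is the regular hexagon circumscribed
to the unit circle with two horizontal facets. -/
noncomputable def phi (x : ℝ × ℝ) : ℝ :=
  max |x.2| (max (|Real.sqrt 3 * x.1 + x.2| / 2) (|Real.sqrt 3 * x.1 - x.2| / 2))

/-- The dual norm `φ°`. -/
noncomputable def phiD (ξ : ℝ × ℝ) : ℝ :=
  max (2 * |ξ.1| / Real.sqrt 3) (max |ξ.1 / Real.sqrt 3 + ξ.2| |ξ.1 / Real.sqrt 3 - ξ.2|)

/-- Counterclockwise rotation by 90°. -/
def perp (x : ℝ × ℝ) : ℝ × ℝ := (-x.2, x.1)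

/-- Euclidean scalar product on `ℝ × ℝ`. -/
def dot (x y : ℝ × ℝ) : ℝ := x.1 * y.1 + x.2 * y.2

open MeasureTheory Set intervalIntegral

lemma key_ineq (b c u v : ℝ) (hb : |b| ≤ 1) (hc : |c| ≤ 1) (hbc : |b - c| ≤ 1) :
    b * u + c * v ≤ max |u + v| (max |u| |v|) := by
  rw [abs_le] at hb hc hbc
  have hA : |u + v| ≤ max |u + v| (max |u| |v|) := le_max_left _ _
  have hB : |u| ≤ max |u + v| (max |u| |v|) := (le_max_left _ _).trans (le_max_right _ _)
  have hC : |v| ≤ max |u + v| (max |u| |v|) := (le_max_right _ _).trans (le_max_right _ _)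
  rcases le_total 0 u with hu | hu <;> rcases le_total 0 v with hv | hv
  · refine le_trans ?_ hA
    nlinarith [le_abs_self (u + v), mul_nonneg (sub_nonneg.2 hb.2) hu,
      mul_nonneg (sub_nonneg.2 hc.2) hv]
  · rcases le_total 0 (u + v) with huv | huv
    · refine le_trans ?_ hB
      nlinarith [le_abs_self u, mul_nonneg (sub_nonneg.2 hb.2) huv,
        mul_nonneg (sub_nonneg.2 hbc.2) (neg_nonneg.2 hv)]
    · refine le_trans ?_ hC
      nlinarith [neg_abs_le v, mul_nonneg (by linarith [hc.1] : (0:ℝ) ≤ c + 1)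
        (by linarith : (0:ℝ) ≤ -(u + v)), mul_nonneg (sub_nonneg.2 hbc.2) hu]
  · rcases le_total 0 (u + v) with huv | huv
    · refine le_trans ?_ hC
      nlinarith [le_abs_self v, mul_nonneg (sub_nonneg.2 hc.2) huv,
        mul_nonneg (by linarith [hbc.1] : (0:ℝ) ≤ (b - c) + 1) (by linarith : (0:ℝ) ≤ -u)]
    · refine le_trans ?_ hB
      nlinarith [neg_abs_le u, mul_nonneg (by linarith [hb.1] : (0:ℝ) ≤ b + 1)
        (by linarith : (0:ℝ) ≤ -(u + v)), mul_nonneg (by linarith [hbc.1] : (0:ℝ) ≤ (b - c) + 1) hv]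
  · refine le_trans ?_ hA
    nlinarith [neg_abs_le (u + v), mul_nonneg (by linarith [hb.1] : (0:ℝ) ≤ b + 1)
      (by linarith : (0:ℝ) ≤ -u), mul_nonneg (by linarith [hc.1] : (0:ℝ) ≤ c + 1)
      (by linarith : (0:ℝ) ≤ -v)]

lemma dual_ineq (N ξ : ℝ × ℝ) (hN : phi N ≤ 1) : dot N ξ ≤ phiD ξ := by
  have hs0 : (0:ℝ) < Real.sqrt 3 := Real.sqrt_pos.2 (by norm_num)
  have hs : Real.sqrt 3 * Real.sqrt 3 = 3 := Real.mul_self_sqrt (by norm_num)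
  have h1 : |N.2| ≤ 1 := le_trans (le_max_left _ _) hN
  have h2 : |(Real.sqrt 3 * N.1 + N.2)| / 2 ≤ 1 :=
    le_trans (le_trans (le_max_left _ _) (le_max_right _ _)) hN
  have h3 : |(Real.sqrt 3 * N.1 - N.2)| / 2 ≤ 1 :=
    le_trans (le_trans (le_max_right _ _) (le_max_right _ _)) hN
  set b := (Real.sqrt 3 * N.1 + N.2) / 2 with hbdef
  set c := (Real.sqrt 3 * N.1 - N.2) / 2 with hcdef
  set u := ξ.1 / Real.sqrt 3 + ξ.2 with hudef
  set v := ξ.1 / Real.sqrt 3 - ξ.2 with hvdef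
  have hb : |b| ≤ 1 := by rw [hbdef, abs_div]; simpa using h2
  have hc : |c| ≤ 1 := by rw [hcdef, abs_div]; simpa using h3
  have hbc : |b - c| ≤ 1 := by
    have : b - c = N.2 := by rw [hbdef, hcdef]; ring
    rw [this]; exact h1
  have hdot : dot N ξ = b * u + c * v := by
    rw [hbdef, hcdef, hudef, hvdef, dot]
    field_simp
    ring
  have huv : |u + v| = 2 * |ξ.1| / Real.sqrt 3 := by
    have : u + v = 2 * ξ.1 / Real.sqrt 3 := by rw [hudef, hvdef]; ring
    rw [this, abs_div, abs_of_pos hs0, abs_mul]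
    norm_num
  have := key_ineq b c u v hb hc hbc
  rw [hdot, phiD, ← huv]
  exact this

lemma phiD_nonneg (ξ : ℝ × ℝ) : 0 ≤ phiD ξ :=
  le_trans (by positivity) (le_max_left _ _)

lemma phiD_le (ξ : ℝ × ℝ) : phiD ξ ≤ 3 * ‖ξ‖ := by
  have h1 : |ξ.1| ≤ ‖ξ‖ := by
    simpa using norm_fst_le ξ
  have h2 : |ξ.2| ≤ ‖ξ‖ := by
    simpa using norm_snd_le ξ
  have hs1 : (1:ℝ) ≤ Real.sqrt 3 := by
    rw [show (1:ℝ) = Real.sqrt 1 by simp]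
    exact Real.sqrt_le_sqrt (by norm_num)
  have hs0 : (0:ℝ) < Real.sqrt 3 := by linarith
  have hd : |ξ.1| / Real.sqrt 3 ≤ |ξ.1| := div_le_self (abs_nonneg _) hs1
  have habs : |ξ.1 / Real.sqrt 3| = |ξ.1| / Real.sqrt 3 := by
    rw [abs_div, abs_of_pos hs0]
  refine max_le ?_ (max_le ?_ ?_)
  · have hdd : 2 / Real.sqrt 3 ≤ 2 := div_le_self (by norm_num) hs1
    calc 2 * |ξ.1| / Real.sqrt 3 = |ξ.1| * (2 / Real.sqrt 3) := by ring
      _ ≤ |ξ.1| * 2 := mul_le_mul_of_nonneg_left hdd (abs_nonneg _)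
      _ ≤ 3 * ‖ξ‖ := by nlinarith [norm_nonneg ξ]
  · calc |ξ.1 / Real.sqrt 3 + ξ.2| ≤ |ξ.1 / Real.sqrt 3| + |ξ.2| := abs_add_le _ _
      _ ≤ ‖ξ‖ + ‖ξ‖ := by rw [habs]; exact add_le_add (hd.trans h1) h2
      _ ≤ 3 * ‖ξ‖ := by nlinarith [norm_nonneg ξ]
  · calc |ξ.1 / Real.sqrt 3 - ξ.2| ≤ |ξ.1 / Real.sqrt 3| + |ξ.2| := abs_sub _ _
      _ ≤ ‖ξ‖ + ‖ξ‖ := by rw [habs]; exact add_le_add (hd.trans h1) h2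
      _ ≤ 3 * ‖ξ‖ := by nlinarith [norm_nonneg ξ]

lemma norm_perp (x : ℝ × ℝ) : ‖perp x‖ = ‖x‖ := by
  simp [perp, Prod.norm_def, max_comm]

lemma continuous_phiD : Continuous phiD := by
  unfold phiD; fun_prop

lemma norm_deriv_le {E : Type*} [NormedAddCommGroup E] [NormedSpace ℝ E]
    {f : ℝ → E} {K : NNReal} (hf : LipschitzWith K f) (t : ℝ) : ‖deriv f t‖ ≤ K := by
  by_cases h : DifferentiableAt ℝ f t
  · have h1 : deriv f t = fderiv ℝ f t 1 := (fderiv_apply_one_eq_deriv).symm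
    calc ‖deriv f t‖ = ‖fderiv ℝ f t 1‖ := by rw [h1]
      _ ≤ ‖fderiv ℝ f t‖ * ‖(1:ℝ)‖ := (fderiv ℝ f t).le_opNorm 1
      _ ≤ K * 1 := by
          rw [norm_one]
          exact mul_le_mul_of_nonneg_right (norm_fderiv_le_of_lipschitz ℝ hf) zero_le_one
      _ = K := mul_one _
  · rw [deriv_zero_of_not_differentiableAt h]; simp

lemma bdd_meas_intervalIntegrable {f : ℝ → ℝ} (hm : Measurable f) {C : ℝ}
    (h : ∀ x, |f x| ≤ C) : IntervalIntegrable f volume 0 1 := by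
  rw [intervalIntegrable_iff]
  have hfin : IntegrableOn (fun _ : ℝ => C) (Set.uIoc 0 1) volume := by
    refine integrableOn_const ?_
    rw [Set.uIoc_of_le zero_le_one, Real.volume_Ioc]
    exact ENNReal.ofReal_ne_top
  exact hfin.mono' hm.aestronglyMeasurable.restrict (ae_of_all _ fun x => by simpa using h x)

/-- For a continuous monotone function, the integral of the derivative is at most the
increment. -/
lemma mono_integral_deriv_le {f : ℝ → ℝ} (hf : Monotone f) (hcont : Continuous f)
    {a b : ℝ} (hab : a ≤ b) : ∫ t in a..b, deriv f t ≤ f b - f a := by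
  set μ := hf.stieltjesFunction.measure with hμ
  have hst : ∀ x, hf.stieltjesFunction x = f x := fun x => by
    rw [hf.stieltjesFunction_eq]
    exact hf.continuousWithinAt_Ioi_iff_rightLim_eq.1 hcont.continuousAt.continuousWithinAt
  have hae : ∀ᵐ x, deriv f x = (μ.rnDeriv volume x).toReal := by
    filter_upwards [hf.ae_hasDerivAt] with x hx using hx.deriv
  rw [intervalIntegral.integral_of_le hab]
  have hfin : μ (Ioc a b) ≠ ⊤ := by
    rw [hμ, StieltjesFunction.measure_Ioc]
    exact ENNReal.ofReal_ne_top
  calc ∫ t in Ioc a b, deriv f t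
      = ∫ t in Ioc a b, (μ.rnDeriv volume t).toReal := by
        exact integral_congr_ae (ae_restrict_of_ae hae)
    _ = (∫⁻ t in Ioc a b, μ.rnDeriv volume t).toReal := by
        refine integral_toReal ((μ.measurable_rnDeriv volume).aemeasurable.restrict) ?_
        exact ae_restrict_of_ae (μ.rnDeriv_lt_top volume)
    _ ≤ (μ (Ioc a b)).toReal := by
        refine ENNReal.toReal_mono hfin (μ.setLIntegral_rnDeriv_le _)
    _ = f b - f a := by
        rw [hμ, StieltjesFunction.measure_Ioc, hst, hst]
        exact ENNReal.toReal_ofReal (by linarith [hf hab])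

/-- FTC inequality for Lipschitz functions. -/
lemma lip_sub_le_integral {g : ℝ → ℝ} {C : NNReal} (hg : LipschitzWith C g) :
    g 1 - g 0 ≤ ∫ t in (0:ℝ)..1, deriv g t := by
  set f : ℝ → ℝ := fun t => C * t - g t with hfdef
  have hmono : Monotone f := by
    intro x y hxy
    have := hg.dist_le_mul x y
    rw [Real.dist_eq, Real.dist_eq] at this
    have h2 := abs_le.1 this
    simp only [hfdef]
    have : |x - y| = y - x := by rw [abs_sub_comm, abs_of_nonneg (by linarith)]
    rw [this] at h2
    nlinarith [h2.2]
  have hcont : Continuous f := (continuous_const.mul continuous_id).sub hg.continuous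
  have hderiv : ∀ᵐ x : ℝ, deriv f x = C - deriv g x := by
    filter_upwards [hg.ae_differentiableAt_of_real (μ := volume)] with x hx
    have h1 : HasDerivAt f (C - deriv g x) x := by
      exact (((hasDerivAt_id x).const_mul (C:ℝ)).sub hx.hasDerivAt).congr_deriv (by simp)
    exact h1.deriv
  have hgint : IntervalIntegrable (deriv g) volume 0 1 :=
    bdd_meas_intervalIntegrable (measurable_deriv g) (fun x => by
      simpa using norm_deriv_le hg x)
  have h1 : ∫ t in (0:ℝ)..1, deriv f t ≤ f 1 - f 0 := mono_integral_deriv_le hmono hcont zero_le_one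
  have h2 : ∫ t in (0:ℝ)..1, deriv f t = ∫ t in (0:ℝ)..1, ((C:ℝ) - deriv g t) := by
    refine intervalIntegral.integral_congr_ae ?_
    filter_upwards [hderiv] with x hx _ using hx
  have h3 : ∫ t in (0:ℝ)..1, ((C:ℝ) - deriv g t)
      = (C:ℝ) - ∫ t in (0:ℝ)..1, deriv g t := by
    rw [intervalIntegral.integral_sub intervalIntegrable_const hgint]
    simp
  rw [h2, h3] at h1
  simp only [hfdef] at h1
  have : f 1 - f 0 = (C:ℝ) - (g 1 - g 0) := by simp [hfdef]; ring
  linarith [h1]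

lemma continuous_perp : Continuous perp := by
  unfold perp; fun_prop

/-- Calibration estimate along one Lipschitz curve. -/
lemma curve_est (N : ℝ × ℝ) (hN : phi N ≤ 1) (γ : ℝ → ℝ × ℝ) (K : NNReal)
    (hγ : LipschitzWith K γ) :
    dot N (perp (γ 1 - γ 0)) ≤ ∫ t in (0:ℝ)..1, phiD (perp (deriv γ t)) := by
  set g : ℝ → ℝ := fun t => N.1 * (-(γ t).2) + N.2 * (γ t).1 with hgdef
  have habs : ∀ v : ℝ × ℝ, |dot N (perp v)| ≤ 2 * ‖N‖ * ‖v‖ := by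
    intro v
    have h1 : |N.1| ≤ ‖N‖ := by simpa using norm_fst_le N
    have h2 : |N.2| ≤ ‖N‖ := by simpa using norm_snd_le N
    have h3 : |v.1| ≤ ‖v‖ := by simpa using norm_fst_le v
    have h4 : |v.2| ≤ ‖v‖ := by simpa using norm_snd_le v
    have k1 : |N.1| * |v.2| ≤ ‖N‖ * ‖v‖ := mul_le_mul h1 h4 (abs_nonneg _) (norm_nonneg _)
    have k2 : |N.2| * |v.1| ≤ ‖N‖ * ‖v‖ := mul_le_mul h2 h3 (abs_nonneg _) (norm_nonneg _)
    calc |dot N (perp v)| = |N.1 * (-v.2) + N.2 * v.1| := by simp [dot, perp]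
      _ ≤ |N.1 * (-v.2)| + |N.2 * v.1| := abs_add_le _ _
      _ = |N.1| * |v.2| + |N.2| * |v.1| := by rw [abs_mul, abs_mul, abs_neg]
      _ ≤ 2 * ‖N‖ * ‖v‖ := by linarith
  set c : NNReal := 2 * ‖N‖₊ * K with hcdef
  have hcc : (c : ℝ) = 2 * ‖N‖ * (K : ℝ) := by
    rw [hcdef]; push_cast [coe_nnnorm]; ring
  have hg : LipschitzWith c g := by
    apply LipschitzWith.of_dist_le_mul
    intro x y
    have hxy : g x - g y = dot N (perp (γ x - γ y)) := by
      simp only [hgdef, dot, perp, Prod.fst_sub, Prod.snd_sub]; ring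
    rw [Real.dist_eq, hxy]
    calc |dot N (perp (γ x - γ y))| ≤ 2 * ‖N‖ * ‖γ x - γ y‖ := habs _
      _ = 2 * ‖N‖ * dist (γ x) (γ y) := by rw [dist_eq_norm]
      _ ≤ 2 * ‖N‖ * ((K : ℝ) * dist x y) :=
          mul_le_mul_of_nonneg_left (hγ.dist_le_mul x y)
            (by positivity)
      _ = (c : ℝ) * dist x y := by rw [hcc]; ring
  have hmeas : Measurable fun t => phiD (perp (deriv γ t)) :=
    (continuous_phiD.comp continuous_perp).measurable.comp (measurable_deriv γ)
  have hbound : ∀ t, |phiD (perp (deriv γ t))| ≤ 3 * (K : ℝ) := by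
    intro t
    rw [abs_of_nonneg (phiD_nonneg _)]
    calc phiD (perp (deriv γ t)) ≤ 3 * ‖perp (deriv γ t)‖ := phiD_le _
      _ = 3 * ‖deriv γ t‖ := by rw [norm_perp]
      _ ≤ 3 * (K : ℝ) := by nlinarith [norm_deriv_le hγ t]
  have hint1 : IntervalIntegrable (fun t => phiD (perp (deriv γ t))) volume 0 1 :=
    bdd_meas_intervalIntegrable hmeas hbound
  have hint2 : IntervalIntegrable (deriv g) volume 0 1 :=
    bdd_meas_intervalIntegrable (measurable_deriv g)
      (fun x => by simpa using norm_deriv_le hg x)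
  have hmono : ∫ t in (0:ℝ)..1, deriv g t ≤ ∫ t in (0:ℝ)..1, phiD (perp (deriv γ t)) := by
    refine intervalIntegral.integral_mono_ae zero_le_one hint2 hint1 ?_
    filter_upwards [hγ.ae_differentiableAt (μ := volume)] with x hx
    have hd : HasDerivAt γ (deriv γ x) x := hx.hasDerivAt
    have h1 : HasDerivAt (fun t => (γ t).1) (deriv γ x).1 x :=
      (ContinuousLinearMap.fst ℝ ℝ ℝ).hasFDerivAt.comp_hasDerivAt x hd
    have h2 : HasDerivAt (fun t => (γ t).2) (deriv γ x).2 x :=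
      (ContinuousLinearMap.snd ℝ ℝ ℝ).hasFDerivAt.comp_hasDerivAt x hd
    have hgd : HasDerivAt g (dot N (perp (deriv γ x))) x := by
      have h3 : HasDerivAt g (N.1 * (-(deriv γ x).2) + N.2 * (deriv γ x).1) x :=
        (h2.neg.const_mul N.1).add (h1.const_mul N.2)
      convert h3 using 1
      simp only [dot, perp]
    rw [hgd.deriv]
    exact dual_ineq N _ hN
  have hsub : g 1 - g 0 ≤ ∫ t in (0:ℝ)..1, deriv g t := lip_sub_le_integral hg
  have hlin : dot N (perp (γ 1 - γ 0)) = g 1 - g 0 := by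
    simp only [hgdef, dot, perp, Prod.fst_sub, Prod.snd_sub]; ring
  rw [hlin]
  exact hsub.trans hmono

/-- Any triod of Lipschitz curves joining `X₁, X₂, X₃` through a common point `T` has
`φ`-length at least that of a critical conical triod through `O` (calibration core of
the minimality of conical critical triods). -/
theorem conical_critical_triod_is_minimal
    (O X₁ X₂ X₃ N₁ N₂ N₃ : ℝ × ℝ)
    (hN1 : phi N₁ ≤ 1) (hN2 : phi N₂ ≤ 1) (hN3 : phi N₃ ≤ 1)
    (hsum : N₁ + N₂ + N₃ = 0)
    (hc1 : dot N₁ (perp (X₁ - O)) = phiD (perp (X₁ - O)))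
    (hc2 : dot N₂ (perp (X₂ - O)) = phiD (perp (X₂ - O)))
    (hc3 : dot N₃ (perp (X₃ - O)) = phiD (perp (X₃ - O)))
    (T : ℝ × ℝ) (γ₁ γ₂ γ₃ : ℝ → ℝ × ℝ) (K₁ K₂ K₃ : NNReal)
    (hγ1 : LipschitzWith K₁ γ₁) (hγ2 : LipschitzWith K₂ γ₂) (hγ3 : LipschitzWith K₃ γ₃)
    (h10 : γ₁ 0 = T) (h20 : γ₂ 0 = T) (h30 : γ₃ 0 = T)
    (h11 : γ₁ 1 = X₁) (h21 : γ₂ 1 = X₂) (h31 : γ₃ 1 = X₃) :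
    phiD (perp (X₁ - O)) + phiD (perp (X₂ - O)) + phiD (perp (X₃ - O)) ≤
      (∫ t in (0:ℝ)..1, phiD (perp (deriv γ₁ t))) +
      (∫ t in (0:ℝ)..1, phiD (perp (deriv γ₂ t))) +
      (∫ t in (0:ℝ)..1, phiD (perp (deriv γ₃ t))) := by
  have e1 := curve_est N₁ hN1 γ₁ K₁ hγ1
  have e2 := curve_est N₂ hN2 γ₂ K₂ hγ2
  have e3 := curve_est N₃ hN3 γ₃ K₃ hγ3
  rw [h10, h11] at e1
  rw [h20, h21] at e2
  rw [h30, h31] at e3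
  have hs1 : N₁.1 + N₂.1 + N₃.1 = 0 := by
    have := congrArg Prod.fst hsum; simpa using this
  have hs2 : N₁.2 + N₂.2 + N₃.2 = 0 := by
    have := congrArg Prod.snd hsum; simpa using this
  have key : phiD (perp (X₁ - O)) + phiD (perp (X₂ - O)) + phiD (perp (X₃ - O)) =
      dot N₁ (perp (X₁ - T)) + dot N₂ (perp (X₂ - T)) + dot N₃ (perp (X₃ - T)) := by
    rw [← hc1, ← hc2, ← hc3]
    simp only [dot, perp, Prod.fst_sub, Prod.snd_sub]
    linear_combination (O.2 - T.2) * hs1 + (T.1 - O.1) * hs2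
  rw [key]
  exact add_le_add (add_le_add e1 e2) e3
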